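/- For a trajectory undergoing an impulsive force at a point y (i.e., piecewise inertial motion x → y → z with equal time steps), the area of the triangle formed by the actual displacement in the second interval equals the area of the triangle that would be swept by unperturbed inertial motion, whenever the impulse (change of momentum) is directed along the line from the force center to y. Formally: if z = 2y − x + w with w parallel to y (force center at origin), then the triangles (0, x, y) and (0, y, z) have equal area. -/
import Mathlib


/-- Twice the area of the triangle (0, a, b) in ℝ², up to sign: the cross product. -/
def cross2 (a b : ℝ × ℝ) : ℝ := a.1 * b.2 - a.2 * b.1

theorem equal_areas_impulse (x y z : ℝ × ℝ) (lam : ℝ)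
    (hz : z = (2 : ℝ) • y - x + lam • y) :
    |cross2 x y| / 2 = |cross2 y z| / 2 := by
  subst hz
  simp only [cross2, Prod.smul_fst, Prod.smul_snd, Prod.fst_add, Prod.snd_add,
    Prod.fst_sub, Prod.snd_sub, smul_eq_mul]
  rw [show y.1 * ((2:ℝ) * y.2 - x.2 + lam * y.2) - y.2 * (2 * y.1 - x.1 + lam * y.1)
      = x.1 * y.2 - x.2 * y.1 from by ring]
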